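/- Let $\Phi$ be a finite crystallographic root system in a Euclidean space with Weyl group $W$, positive roots $\Phi^+$, and $\rho$ half the sum of positive roots (equivalently, $\langle \rho, \alpha^\vee \rangle = 1$ for each simple root $\alpha$). Let $\lambda$ be a dominant element of the coweight lattice and let $\mu = w(\lambda)$ for some $w \in W$. Set $\Phi^-_\mu := \{\alpha \in \Phi^- : \langle \alpha, \mu \rangle > 0\}$ (negative roots pairing positively with $\mu$). Then $\sum_{\alpha \in \Phi^-_\mu} \langle \alpha, \mu \rangle = \langle \rho, \lambda - \mu \rangle$. -/

import Mathlib

open scoped RealInnerProductSpace Classical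

/-- A finite crystallographic root system with a choice of positive system,
realized in a Euclidean space: roots are nonzero, closed under negation and
under root reflections, positivity is cut out by a linear functional not
vanishing on any root, and Cartan integers are integers. -/
def IsRootSystemData {V : Type*} [NormedAddCommGroup V] [InnerProductSpace ℝ V]
    (Φ pos : Finset V) : Prop :=
  (∀ α ∈ Φ, α ≠ (0 : V)) ∧
  (∀ α ∈ Φ, -α ∈ Φ) ∧
  pos ⊆ Φ ∧
  (∃ f : V →ₗ[ℝ] ℝ, (∀ α ∈ Φ, f α ≠ 0) ∧ (∀ α ∈ Φ, (α ∈ pos ↔ 0 < f α))) ∧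
  (∀ α ∈ Φ, ∀ β ∈ Φ, β - (2 * ⟪β, α⟫ / ⟪α, α⟫) • α ∈ Φ) ∧
  (∀ α ∈ Φ, ∀ β ∈ Φ, ∃ n : ℤ, 2 * ⟪β, α⟫ / ⟪α, α⟫ = (n : ℝ))

/-- The Weyl group of the root system: the subgroup of linear automorphisms
generated by the reflections in the roots. -/
def weylGroup {V : Type*} [NormedAddCommGroup V] [InnerProductSpace ℝ V]
    (Φ : Finset V) : Subgroup (V ≃ₗ[ℝ] V) :=
  Subgroup.closure
    {g : V ≃ₗ[ℝ] V | ∃ α ∈ Φ, ∀ x : V, g x = x - (2 * ⟪x, α⟫ / ⟪α, α⟫) • α}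

section Aux

variable {V : Type*} [NormedAddCommGroup V] [InnerProductSpace ℝ V]

lemma inner_reflect_aux (α : V) (hα : ⟪α, α⟫ ≠ 0) (x y : V) :
    ⟪x - (2 * ⟪x, α⟫ / ⟪α, α⟫) • α, y - (2 * ⟪y, α⟫ / ⟪α, α⟫) • α⟫ = ⟪x, y⟫ := by
  simp only [inner_sub_left, inner_sub_right, real_inner_smul_left, real_inner_smul_right]
  rw [real_inner_comm y α, real_inner_comm α x]
  field_simp
  ring

lemma reflect_invol (α : V) (hα : ⟪α, α⟫ ≠ 0) (x : V) :
    (x - (2 * ⟪x, α⟫ / ⟪α, α⟫) • α) -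
      (2 * ⟪x - (2 * ⟪x, α⟫ / ⟪α, α⟫) • α, α⟫ / ⟪α, α⟫) • α = x := by
  rw [inner_sub_left, real_inner_smul_left]
  have : 2 * (⟪x, α⟫ - 2 * ⟪x, α⟫ / ⟪α, α⟫ * ⟪α, α⟫) / ⟪α, α⟫ = -(2 * ⟪x, α⟫ / ⟪α, α⟫) := by
    field_simp; ring
  rw [this, neg_smul, sub_neg_eq_add, sub_add_cancel]

/-- Elements of the Weyl group preserve the inner product and permute the roots. -/
lemma weyl_props (Φ pos : Finset V) (hrs : IsRootSystemData Φ pos)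
    (w : V ≃ₗ[ℝ] V) (hw : w ∈ weylGroup Φ) :
    (∀ x y : V, ⟪w x, w y⟫ = ⟪x, y⟫) ∧ (∀ x : V, x ∈ Φ ↔ w x ∈ Φ) := by
  obtain ⟨hne, hnegmem, hsub, hfs, hrefl, hint⟩ := hrs
  refine Subgroup.closure_induction ?_ ?_ ?_ ?_ hw
  · rintro g ⟨α, hαΦ, hg⟩
    have hα : ⟪α, α⟫ ≠ (0 : ℝ) := by
      simpa [inner_self_eq_zero] using hne α hαΦ
    constructor
    · intro x y
      rw [hg x, hg y, inner_reflect_aux α hα]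
    · intro x
      constructor
      · intro hx
        rw [hg x]; exact hrefl α hαΦ x hx
      · intro hx
        have h2 : g (g x) ∈ Φ := by rw [hg (g x)]; exact hrefl α hαΦ _ hx
        rwa [hg (g x), hg x, reflect_invol α hα] at h2
  · exact ⟨fun x y => rfl, fun x => Iff.rfl⟩
  · rintro a b _ _ ⟨hai, ham⟩ ⟨hbi, hbm⟩
    constructor
    · intro x y
      rw [show (a * b) x = a (b x) from rfl, show (a * b) y = a (b y) from rfl, hai, hbi]
    · intro x
      rw [show (a * b) x = a (b x) from rfl, ← ham (b x), hbm x]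
  · rintro a _ ⟨hai, ham⟩
    have hA : ∀ z : V, a (a⁻¹ z) = z := fun z => a.apply_symm_apply z
    constructor
    · intro x y
      have := hai (a⁻¹ x) (a⁻¹ y)
      rw [hA, hA] at this; exact this.symm
    · intro x
      rw [ham (a⁻¹ x), hA]

end Aux

/-- for a dominant coweight `lam` and `μ = w lam`, the sum of the
pairings `⟨α, μ⟩` over the negative roots pairing positively with `μ` equals
`⟨ρ, λ - μ⟩`, where `ρ` is the half-sum of positive roots. -/
theorem sum_neg_roots_pairing_eq_rho_pairing
    {V : Type*} [NormedAddCommGroup V] [InnerProductSpace ℝ V]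
    (Φ pos : Finset V) (hrs : IsRootSystemData Φ pos)
    (ρ : V) (hρ : ρ = (2 : ℝ)⁻¹ • ∑ α ∈ pos, α)
    (lam : V) (hdom : ∀ α ∈ pos, 0 ≤ ⟪α, lam⟫)
    (hlat : ∀ α ∈ Φ, ∃ n : ℤ, ⟪α, lam⟫ = (n : ℝ))
    (w : V ≃ₗ[ℝ] V) (hw : w ∈ weylGroup Φ)
    (μ : V) (hμ : μ = w lam) :
    ∑ α ∈ Φ.filter (fun α => α ∉ pos ∧ 0 < ⟪α, μ⟫), ⟪α, μ⟫ = ⟪ρ, lam - μ⟫ := by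
  obtain ⟨hwi, hwm⟩ := weyl_props Φ pos hrs w hw
  obtain ⟨hne, hnegmem, hsub, ⟨f, hf0, hfpos⟩, hrefl, hint⟩ := hrs
  -- a root is negative iff its negation is positive
  have hneg_iff : ∀ β ∈ Φ, (β ∉ pos ↔ -β ∈ pos) := by
    intro β hβ
    have h1 := hfpos β hβ
    have h2 := hfpos (-β) (hnegmem β hβ)
    have h3 := hf0 β hβ
    rw [map_neg] at h2
    constructor
    · intro h
      rw [h2]
      rcases lt_or_gt_of_ne h3 with hlt | hgt
      · linarith
      · exact absurd (h1.mpr hgt) h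
    · intro h hc
      have g1 := h1.mp hc
      have g2 := h2.mp h
      linarith
  have hposneg : ∀ γ ∈ Φ, γ ∈ pos → -γ ∉ pos := by
    intro γ hγ h hc
    have g1 := (hfpos γ hγ).mp h
    have g2 := (hfpos (-γ) (hnegmem γ hγ)).mp hc
    rw [map_neg] at g2; linarith
  -- value transport along w
  have hval : ∀ x : V, ⟪w x, μ⟫ = ⟪x, lam⟫ := fun x => by rw [hμ, hwi]
  have hvals : ∀ x : V, ⟪x, μ⟫ = ⟪w.symm x, lam⟫ := fun x => by
    rw [← hval (w.symm x), w.apply_symm_apply]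
  -- Step 2 : transport the sum over positive roots
  have hsum2 : ∑ α ∈ pos, ⟪α, μ⟫ =
      ∑ β ∈ Φ.filter (fun β => w β ∈ pos), ⟪β, lam⟫ := by
    refine Finset.sum_nbij' (fun α => w.symm α) (fun β => w β) ?_ ?_ ?_ ?_ ?_
    · intro α hα
      rw [Finset.mem_filter]
      constructor
      · rw [hwm (w.symm α), w.apply_symm_apply]; exact hsub hα
      · rw [w.apply_symm_apply]; exact hα
    · intro β hβ
      exact (Finset.mem_filter.mp hβ).2
    · intro α _; exact w.apply_symm_apply α
    · intro β _; exact w.symm_apply_apply β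
    · intro α _; exact hvals α
  -- Step 3 : the negation bijection between pos \ S and S \ pos
  have hsum3 : ∑ β ∈ pos \ Φ.filter (fun β => w β ∈ pos), (-⟪β, lam⟫) =
      ∑ β ∈ Φ.filter (fun β => w β ∈ pos) \ pos, ⟪β, lam⟫ := by
    refine Finset.sum_nbij' (fun β => -β) (fun β => -β) ?_ ?_ ?_ ?_ ?_
    · intro β hβ
      rw [Finset.mem_sdiff] at hβ ⊢
      obtain ⟨hp, hns⟩ := hβ
      have hβΦ : β ∈ Φ := hsub hp
      have hwβns : w β ∉ pos := fun h => hns (Finset.mem_filter.mpr ⟨hβΦ, h⟩)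
      have hwβΦ : w β ∈ Φ := (hwm β).mp hβΦ
      refine ⟨Finset.mem_filter.mpr ⟨hnegmem β hβΦ, ?_⟩, hposneg β hβΦ hp⟩
      rw [map_neg]
      exact (hneg_iff (w β) hwβΦ).mp hwβns
    · intro β hβ
      rw [Finset.mem_sdiff, Finset.mem_filter] at hβ
      obtain ⟨⟨hβΦ, hwβp⟩, hnp⟩ := hβ
      rw [Finset.mem_sdiff]
      refine ⟨(hneg_iff β hβΦ).mp hnp, ?_⟩
      intro hc
      rw [Finset.mem_filter, map_neg] at hc
      exact hposneg (w β) ((hwm β).mp hβΦ) hwβp hc.2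
    · intro β _; exact neg_neg β
    · intro β _; exact neg_neg β
    · intro β _; rw [inner_neg_left]
  -- pairing with ρ
  have hρpair : ∀ x : V, ⟪ρ, x⟫ = 2⁻¹ * ∑ α ∈ pos, ⟪α, x⟫ := by
    intro x
    rw [hρ, real_inner_smul_left, sum_inner]
  -- Step 4 : transport the LHS sum along w⁻¹
  have hsum4 : ∑ α ∈ Φ.filter (fun α => α ∉ pos ∧ 0 < ⟪α, μ⟫), ⟪α, μ⟫ =
      ∑ β ∈ Φ.filter (fun β => w β ∉ pos ∧ 0 < ⟪β, lam⟫), ⟪β, lam⟫ := by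
    refine Finset.sum_nbij' (fun α => w.symm α) (fun β => w β) ?_ ?_ ?_ ?_ ?_
    · intro α hα
      rw [Finset.mem_filter] at hα ⊢
      obtain ⟨hαΦ, hnp, hpos0⟩ := hα
      refine ⟨?_, ?_, ?_⟩
      · rw [hwm (w.symm α), w.apply_symm_apply]; exact hαΦ
      · rw [w.apply_symm_apply]; exact hnp
      · rw [← hvals α]; exact hpos0
    · intro β hβ
      rw [Finset.mem_filter] at hβ ⊢
      obtain ⟨hβΦ, hnp, hpos0⟩ := hβ
      exact ⟨(hwm β).mp hβΦ, hnp, by rwa [hval β]⟩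
    · intro α _; exact w.apply_symm_apply α
    · intro β _; exact w.symm_apply_apply β
    · intro α _; exact hvals α
  -- Step 5 : identify the index set with a filtered difference
  have hT : Φ.filter (fun β => w β ∉ pos ∧ 0 < ⟪β, lam⟫) =
      (pos \ Φ.filter (fun β => w β ∈ pos)).filter (fun β => 0 < ⟪β, lam⟫) := by
    ext β
    simp only [Finset.mem_filter, Finset.mem_sdiff]
    constructor
    · rintro ⟨hβΦ, hnp, h0⟩
      have hβpos : β ∈ pos := by
        by_contra hc
        have := hdom (-β) ((hneg_iff β hβΦ).mp hc)
        rw [inner_neg_left] at this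
        linarith
      exact ⟨⟨hβpos, fun hs => hnp hs.2⟩, h0⟩
    · rintro ⟨⟨hp, hns⟩, h0⟩
      exact ⟨hsub hp, fun hw' => hns ⟨hsub hp, hw'⟩, h0⟩
  -- Step 6 : drop the positivity filter (the omitted terms vanish)
  have hsum6 : ∑ β ∈ ((pos \ Φ.filter (fun β => w β ∈ pos)).filter
        (fun β => 0 < ⟪β, lam⟫)), ⟪β, lam⟫ =
      ∑ β ∈ pos \ Φ.filter (fun β => w β ∈ pos), ⟪β, lam⟫ := by
    refine Finset.sum_subset (Finset.filter_subset _ _) ?_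
    intro β hβ hnf
    have h0 : ¬ 0 < ⟪β, lam⟫ := fun h => hnf (Finset.mem_filter.mpr ⟨hβ, h⟩)
    have := hdom β (Finset.mem_sdiff.mp hβ).1
    linarith
  -- combine everything
  rw [hsum4, hT, hsum6]
  have hsplit1 := Finset.sum_inter_add_sum_sdiff pos (Φ.filter (fun β => w β ∈ pos))
    (fun α => (⟪α, lam⟫ : ℝ))
  have hsplit2 := Finset.sum_inter_add_sum_sdiff (Φ.filter (fun β => w β ∈ pos)) pos
    (fun α => (⟪α, lam⟫ : ℝ))
  have hcomm : ∑ α ∈ pos ∩ Φ.filter (fun β => w β ∈ pos), ⟪α, lam⟫ =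
      ∑ α ∈ Φ.filter (fun β => w β ∈ pos) ∩ pos, ⟪α, lam⟫ := by
    rw [Finset.inter_comm]
  have hρ1 : ⟪ρ, lam - μ⟫ = 2⁻¹ * (∑ α ∈ pos, ⟪α, lam⟫ - ∑ α ∈ pos, ⟪α, μ⟫) := by
    rw [inner_sub_right, hρpair, hρpair]; ring
  rw [Finset.sum_neg_distrib] at hsum3
  rw [hρ1, hsum2]
  linarith
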